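/- Let d be a positive integer and let ζ := e^{2πi/d}. In the field of rational functions ℂ(X), one has the identity ∏_{j=0}^{d-1} (1 − ζ^j X)^{a_d(j)} = ∏_{b ∣ d} (1 − X^{d/b})^{b·μ(d/b)}, where both products use integer (possibly negative) exponents. -/
import Mathlib

open Finset Polynomial

lemma prod_one_sub_smul_X {K : Type*} [Field K] {n : ℕ} {ζ : K}
    (hn : 0 < n) (hζ : IsPrimitiveRoot ζ n) :
    ∏ i ∈ range n, (1 - C (ζ ^ i) * X) = 1 - X ^ n := by
  have hXn : (X : K[X]) ^ n - C 1 = ∏ i ∈ range n, (X - C (ζ ^ i * 1)) :=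
    X_pow_sub_C_eq_prod hζ hn (one_pow n)
  simp only [mul_one, map_one] at hXn
  have hconst : ∏ i ∈ range n, (-(ζ ^ i)) = -1 := by
    have := congrArg (Polynomial.eval 0) hXn
    simpa [zero_pow hn.ne', eval_prod] using this.symm
  have hrefl : ∏ i ∈ range n, ((X : K[X]) - C (ζ ^ (n - i))) = X ^ n - 1 := by
    have h0 : ((X : K[X]) - C (ζ ^ n)) = X - C (ζ ^ 0) := by
      rw [hζ.pow_eq_one, pow_zero]
    have hrr := Finset.prod_range_reflect (fun j => (X : K[X]) - C (ζ ^ (j + 1))) n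
    have key : (∏ i ∈ range n, ((X : K[X]) - C (ζ ^ (n - i)))) * (X - C (ζ ^ 0)) =
        (∏ i ∈ range n, ((X : K[X]) - C (ζ ^ i))) * (X - C (ζ ^ 0)) := by
      have h1 : ∏ i ∈ range n, ((X : K[X]) - C (ζ ^ (n - i))) =
          ∏ i ∈ range n, ((X : K[X]) - C (ζ ^ (i + 1))) := by
        rw [← hrr]
        refine Finset.prod_congr rfl fun i hi => ?_
        rw [mem_range] at hi
        have h3 : n - 1 - i + 1 = n - i := by omega
        rw [h3]
      rw [h1, ← Finset.prod_range_succ' (fun i => (X : K[X]) - C (ζ ^ i)) n,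
        Finset.prod_range_succ, h0]
    have := mul_right_cancel₀ (X_sub_C_ne_zero (ζ ^ 0)) key
    rw [this, ← hXn]
  calc ∏ i ∈ range n, (1 - C (ζ ^ i) * X)
      = ∏ i ∈ range n, (-C (ζ ^ i) * ((X : K[X]) - C (ζ ^ (n - i)))) := by
        refine Finset.prod_congr rfl fun i hi => ?_
        rw [mem_range] at hi
        have h2 : C (ζ ^ i) * C (ζ ^ (n - i)) = 1 := by
          rw [← map_mul, ← pow_add, Nat.add_sub_cancel' hi.le, hζ.pow_eq_one, map_one]
        calc (1 : K[X]) - C (ζ ^ i) * X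
            = -(C (ζ ^ i) * X) + C (ζ ^ i) * C (ζ ^ (n - i)) := by rw [h2]; ring
          _ = -C (ζ ^ i) * ((X : K[X]) - C (ζ ^ (n - i))) := by ring
    _ = (∏ i ∈ range n, -C (ζ ^ i)) * ∏ i ∈ range n, ((X : K[X]) - C (ζ ^ (n - i))) :=
        Finset.prod_mul_distrib
    _ = 1 - X ^ n := by
        have hc : (∏ i ∈ range n, -C (ζ ^ i)) = C (∏ i ∈ range n, -(ζ ^ i)) := by
          rw [map_prod]; simp
        rw [hrefl, hc, hconst, map_neg, map_one]
        ring

section Arith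
open ArithmeticFunction

def ramanujanCoeff (d : ℕ) (j : ℤ) : ℤ :=
  ArithmeticFunction.moebius (d / Int.gcd d j) *
    (Nat.totient d / Nat.totient (d / Int.gcd d j) : ℕ)

lemma gcd_mul_coprime {m n : ℕ} (j : ℕ) (h : m.Coprime n) :
    Nat.gcd (m * n) j = Nat.gcd m j * Nat.gcd n j := by
  have hco : (Nat.gcd m j).Coprime (Nat.gcd n j) :=
    Nat.Coprime.coprime_dvd_right (Nat.gcd_dvd_left n j)
      (Nat.Coprime.coprime_dvd_left (Nat.gcd_dvd_left m j) h)
  refine Nat.dvd_antisymm ?_ ?_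
  · have h1 : Nat.gcd j (m * n) ∣ Nat.gcd j m * Nat.gcd j n := by
      have := gcd_mul_dvd_mul_gcd j m n
      simpa [gcd_eq_nat_gcd] using this
    rw [Nat.gcd_comm (m*n) j, Nat.gcd_comm m j, Nat.gcd_comm n j]
    exact h1
  · exact Nat.dvd_gcd (mul_dvd_mul (Nat.gcd_dvd_left m j) (Nat.gcd_dvd_left n j))
      (hco.mul_dvd_of_dvd_of_dvd (Nat.gcd_dvd_right m j) (Nat.gcd_dvd_right n j))

def divMul (j : ℕ) : ArithmeticFunction ℤ :=
  ⟨fun k => if k ∣ j then (k : ℤ) else 0, by simp⟩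

@[simp] lemma divMul_apply (j k : ℕ) : divMul j k = if k ∣ j then (k : ℤ) else 0 := rfl

lemma divMul_mult (j : ℕ) : (divMul j).IsMultiplicative := by
  refine ⟨by simp, @fun m n h => ?_⟩
  by_cases hm : m ∣ j <;> by_cases hn : n ∣ j <;>
    simp only [divMul_apply]
  · rw [if_pos hm, if_pos hn, if_pos (Nat.Coprime.mul_dvd_of_dvd_of_dvd h hm hn)]
    push_cast; ring
  · rw [if_pos hm, if_neg hn, if_neg (fun hmn => hn (dvd_trans (dvd_mul_left n m) hmn))]
    ring
  · rw [if_neg hm, if_pos hn, if_neg (fun hmn => hm (dvd_trans (dvd_mul_right m n) hmn))]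
    ring
  · rw [if_neg hm, if_neg hn, if_neg (fun hmn => hm (dvd_trans (dvd_mul_right m n) hmn))]
    ring

def ramF (j : ℕ) : ArithmeticFunction ℤ :=
  ⟨fun d => ramanujanCoeff d j, by simp [ramanujanCoeff]⟩

@[simp] lemma ramF_apply (j d : ℕ) : ramF j d = ramanujanCoeff d j := rfl

lemma ramanujanCoeff_nat (d j : ℕ) :
    ramanujanCoeff d j =
      moebius (d / Nat.gcd d j) * (Nat.totient d / Nat.totient (d / Nat.gcd d j) : ℕ) := by
  simp [ramanujanCoeff, Int.gcd_natCast_natCast]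

lemma ramF_mult (j : ℕ) : (ramF j).IsMultiplicative := by
  constructor
  · simp [ramanujanCoeff_nat]
  · intro m n h
    rcases Nat.eq_zero_or_pos m with rfl | hm
    · obtain rfl : n = 1 := (Nat.coprime_zero_left n).mp h
      simp [ramanujanCoeff_nat]
    rcases Nat.eq_zero_or_pos n with rfl | hn
    · obtain rfl : m = 1 := (Nat.coprime_zero_right m).mp h
      simp [ramanujanCoeff_nat]
    simp only [ramF_apply, ramanujanCoeff_nat]
    have hgm : Nat.gcd m j ∣ m := Nat.gcd_dvd_left m j
    have hgn : Nat.gcd n j ∣ n := Nat.gcd_dvd_left n j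
    have hg : Nat.gcd (m * n) j = Nat.gcd m j * Nat.gcd n j := gcd_mul_coprime j h
    have hq : m * n / (Nat.gcd m j * Nat.gcd n j) = (m / Nat.gcd m j) * (n / Nat.gcd n j) :=
      (Nat.div_mul_div_comm hgm hgn).symm
    have hqco : (m / Nat.gcd m j).Coprime (n / Nat.gcd n j) :=
      Nat.Coprime.coprime_dvd_right (Nat.div_dvd_of_dvd hgn)
        (Nat.Coprime.coprime_dvd_left (Nat.div_dvd_of_dvd hgm) h)
    have hmu : moebius ((m / Nat.gcd m j) * (n / Nat.gcd n j))
        = moebius (m / Nat.gcd m j) * moebius (n / Nat.gcd n j) :=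
      isMultiplicative_moebius.map_mul_of_coprime hqco
    have htot : Nat.totient (m * n) = Nat.totient m * Nat.totient n := Nat.totient_mul h
    have htotq : Nat.totient ((m / Nat.gcd m j) * (n / Nat.gcd n j))
        = Nat.totient (m / Nat.gcd m j) * Nat.totient (n / Nat.gcd n j) :=
      Nat.totient_mul hqco
    have hdvd1 : Nat.totient (m / Nat.gcd m j) ∣ Nat.totient m :=
      Nat.totient_dvd_of_dvd (Nat.div_dvd_of_dvd hgm)
    have hdvd2 : Nat.totient (n / Nat.gcd n j) ∣ Nat.totient n :=
      Nat.totient_dvd_of_dvd (Nat.div_dvd_of_dvd hgn)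
    have hdiv : Nat.totient m * Nat.totient n
          / (Nat.totient (m / Nat.gcd m j) * Nat.totient (n / Nat.gcd n j))
        = (Nat.totient m / Nat.totient (m / Nat.gcd m j))
          * (Nat.totient n / Nat.totient (n / Nat.gcd n j)) :=
      (Nat.div_mul_div_comm hdvd1 hdvd2).symm
    rw [hg, hq, hmu, htot, htotq, hdiv]
    push_cast
    ring

lemma holder (d j : ℕ) :
    ramanujanCoeff d j = ∑ k ∈ d.divisors, if k ∣ j then (k : ℤ) * moebius (d / k) else 0 := by
  have hFG : divMul j * (moebius : ArithmeticFunction ℤ) = ramF j := by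
    rw [ArithmeticFunction.IsMultiplicative.eq_iff_eq_on_prime_powers _
      ((divMul_mult j).mul isMultiplicative_moebius) _ (ramF_mult j)]
    intro p i hp
    rcases Nat.eq_zero_or_pos i with rfl | hi
    · simp only [pow_zero]
      rw [((divMul_mult j).mul isMultiplicative_moebius).map_one, (ramF_mult j).map_one]
    obtain ⟨i', rfl⟩ : ∃ i', i = i' + 1 := ⟨i - 1, by omega⟩
    have hppos : 0 < p := hp.pos
    -- compute the convolution side
    have hS : (divMul j * (moebius : ArithmeticFunction ℤ)) (p ^ (i' + 1)) =
        (if p ^ (i' + 1) ∣ j then ((p : ℤ)) ^ (i' + 1) else 0)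
          - (if p ^ i' ∣ j then (p : ℤ) ^ i' else 0) := by
      rw [mul_apply, Nat.sum_divisorsAntidiagonal (fun a b => divMul j a * moebius b),
        Nat.sum_divisors_prime_pow hp]
      rw [Finset.sum_range_succ, Finset.sum_range_succ]
      have hz : ∀ t ∈ Finset.range i',
          divMul j (p ^ t) * moebius (p ^ (i' + 1) / p ^ t) = 0 := by
        intro t ht
        rw [mem_range] at ht
        rw [Nat.pow_div (by omega) hppos,
          moebius_apply_prime_pow hp (by omega), if_neg (by omega)]
        ring
      rw [Finset.sum_congr rfl hz, Finset.sum_const_zero]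
      rw [Nat.pow_div (by omega) hppos, Nat.pow_div (by omega) hppos]
      have e1 : i' + 1 - i' = 1 := by omega
      have e2 : i' + 1 - (i' + 1) = 0 := by omega
      rw [e1, e2, pow_one, pow_zero, moebius_apply_prime hp, moebius_apply_one]
      simp only [divMul_apply]
      split_ifs with h1 h2 <;> push_cast <;> ring
    rw [hS]
    -- now compute the ramanujan side by cases
    by_cases h1 : p ^ (i' + 1) ∣ j
    · have h2 : p ^ i' ∣ j := dvd_trans (pow_dvd_pow p (Nat.le_succ i')) h1
      have hgd : Nat.gcd (p ^ (i' + 1)) j = p ^ (i' + 1) := Nat.gcd_eq_left h1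
      rw [ramF_apply, ramanujanCoeff_nat, hgd, Nat.div_self (pow_pos hppos _),
        moebius_apply_one, Nat.totient_one, Nat.div_one,
        Nat.totient_prime_pow hp (Nat.succ_pos i')]
      rw [if_pos h1, if_pos h2]
      push_cast [Nat.cast_sub hp.one_lt.le]
      ring
    · by_cases h2 : p ^ i' ∣ j
      · have hgd : Nat.gcd (p ^ (i' + 1)) j = p ^ i' := by
          obtain ⟨s, hsle, hs⟩ := (Nat.dvd_prime_pow hp).mp (Nat.gcd_dvd_left (p ^ (i' + 1)) j)
          have hds : p ^ i' ∣ p ^ s := hs ▸ Nat.dvd_gcd (pow_dvd_pow p (Nat.le_succ i')) h2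
          have his : i' ≤ s := (Nat.pow_dvd_pow_iff_le_right hp.one_lt).mp hds
          have hsi : s ≠ i' + 1 := by
            rintro rfl
            exact h1 (hs ▸ Nat.gcd_dvd_right (p ^ (i' + 1)) j)
          have : s = i' := by omega
          rw [hs, this]
        rw [ramF_apply, ramanujanCoeff_nat, hgd, Nat.pow_div (Nat.le_succ i') hppos]
        have e1 : i' + 1 - i' = 1 := by omega
        have hcancel : p ^ (i' + 1 - 1) * (p - 1) / (p - 1) = p ^ i' := by
          rw [Nat.succ_sub_one]
          exact Nat.mul_div_cancel _ (by have := hp.two_le; omega)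
        rw [e1, pow_one, moebius_apply_prime hp,
          Nat.totient_prime_pow hp (Nat.succ_pos i'), Nat.totient_prime hp, hcancel,
          if_neg h1, if_pos h2]
        push_cast
        ring
      · have h2' : ¬ p ^ (i' + 1) ∣ j := h1
        obtain ⟨s, hsle, hs⟩ := (Nat.dvd_prime_pow hp).mp (Nat.gcd_dvd_left (p ^ (i' + 1)) j)
        have hslt : s < i' := by
          by_contra hc
          push_neg at hc
          exact h2 (dvd_trans (pow_dvd_pow p hc) (hs ▸ Nat.gcd_dvd_right (p ^ (i' + 1)) j))
        rw [if_neg h1, if_neg h2, ramF_apply, ramanujanCoeff_nat, hs,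
          Nat.pow_div (by omega) hppos,
          moebius_apply_prime_pow hp (by omega : i' + 1 - s ≠ 0),
          if_neg (by omega : ¬ i' + 1 - s = 1)]
        ring
  have := congrArg (fun f : ArithmeticFunction ℤ => f d) hFG
  simp only [ramF_apply] at this
  rw [← this, mul_apply, Nat.sum_divisorsAntidiagonal (fun a b => divMul j a * moebius b)]
  refine Finset.sum_congr rfl fun k hk => ?_
  simp only [divMul_apply]
  split_ifs <;> ring

end Arith

lemma zpow_sum_aux {α : Type*} {G₀ : Type*} [CommGroupWithZero G₀] (x : G₀) (hx : x ≠ 0)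
    (s : Finset α) (f : α → ℤ) : x ^ (∑ i ∈ s, f i) = ∏ i ∈ s, x ^ f i := by
  classical
  induction s using Finset.cons_induction with
  | empty => simp
  | cons a s ha ih => rw [Finset.sum_cons, Finset.prod_cons, zpow_add₀ hx, ih]

lemma prod_one_sub_C_mul_X_ratfunc {m : ℕ} {ω : ℂ} (hm : 0 < m) (hω : IsPrimitiveRoot ω m) :
    ∏ i ∈ range m, (1 - RatFunc.C (ω ^ i) * RatFunc.X : RatFunc ℂ) = 1 - RatFunc.X ^ m := by
  have h := congrArg (algebraMap (Polynomial ℂ) (RatFunc ℂ)) (prod_one_sub_smul_X hm hω)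
  simpa only [map_prod, map_sub, map_one, map_mul, map_pow,
    RatFunc.algebraMap_C, RatFunc.algebraMap_X] using h

theorem prod_one_sub_zeta_pow_ramanujanCoeff (d : ℕ) (hd : 0 < d)
    (ζ : ℂ) (hζ : ζ = Complex.exp (2 * Real.pi * Complex.I / d)) :
    ∏ j ∈ Finset.range d,
        (1 - RatFunc.C (ζ ^ j) * RatFunc.X : RatFunc ℂ) ^ (ramanujanCoeff d j)
      = ∏ b ∈ d.divisors,
          (1 - RatFunc.X ^ (d / b) : RatFunc ℂ) ^ ((b : ℤ) * ArithmeticFunction.moebius (d / b)) := by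
  have hζd : IsPrimitiveRoot ζ d := by
    rw [hζ]; exact Complex.isPrimitiveRoot_exp d hd.ne'
  have hne : ∀ c : ℂ, (1 - RatFunc.C c * RatFunc.X : RatFunc ℂ) ≠ 0 := by
    intro c
    have hp0 : (1 - Polynomial.C c * Polynomial.X : Polynomial ℂ) ≠ 0 := by
      intro h
      have := congrArg (fun q => Polynomial.coeff q 0) h
      simp at this
    have h2 : (algebraMap (Polynomial ℂ) (RatFunc ℂ)) (1 - Polynomial.C c * Polynomial.X) ≠ 0 :=
      RatFunc.algebraMap_ne_zero hp0
    simpa only [map_sub, map_one, map_mul, RatFunc.algebraMap_C, RatFunc.algebraMap_X] using h2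
  calc
    ∏ j ∈ range d, (1 - RatFunc.C (ζ ^ j) * RatFunc.X : RatFunc ℂ) ^ (ramanujanCoeff d j)
        = ∏ j ∈ range d, ∏ k ∈ d.divisors,
            (1 - RatFunc.C (ζ ^ j) * RatFunc.X : RatFunc ℂ) ^
              (if k ∣ j then (k : ℤ) * ArithmeticFunction.moebius (d / k) else 0) := by
          refine Finset.prod_congr rfl fun j _ => ?_
          rw [holder d j, zpow_sum_aux _ (hne _)]
    _ = ∏ k ∈ d.divisors, ∏ j ∈ range d,
            (1 - RatFunc.C (ζ ^ j) * RatFunc.X : RatFunc ℂ) ^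
              (if k ∣ j then (k : ℤ) * ArithmeticFunction.moebius (d / k) else 0) :=
          Finset.prod_comm
    _ = ∏ b ∈ d.divisors,
          (1 - RatFunc.X ^ (d / b) : RatFunc ℂ) ^
            ((b : ℤ) * ArithmeticFunction.moebius (d / b)) := by
      refine Finset.prod_congr rfl fun k hk => ?_
      obtain ⟨hkd, hd0⟩ := Nat.mem_divisors.mp hk
      have hk0 : 0 < k := Nat.pos_of_mem_divisors hk
      have hdk0 : 0 < d / k := Nat.div_pos (Nat.le_of_dvd hd hkd) hk0
      have hstep1 : ∀ j : ℕ,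
          (1 - RatFunc.C (ζ ^ j) * RatFunc.X : RatFunc ℂ) ^
              (if k ∣ j then (k : ℤ) * ArithmeticFunction.moebius (d / k) else 0)
            = if k ∣ j then
                (1 - RatFunc.C (ζ ^ j) * RatFunc.X : RatFunc ℂ) ^
                  ((k : ℤ) * ArithmeticFunction.moebius (d / k)) else 1 := by
        intro j
        split_ifs <;> simp
      have himg : (range d).filter (fun j => k ∣ j) = (range (d / k)).image (fun i => k * i) := by
        ext j
        simp only [Finset.mem_filter, Finset.mem_range, Finset.mem_image]
        constructor
        · rintro ⟨hjd, c, rfl⟩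
          refine ⟨c, ?_, rfl⟩
          obtain ⟨m, rfl⟩ := hkd
          rwa [Nat.mul_div_cancel_left _ hk0, ← Nat.mul_lt_mul_left hk0]
        · rintro ⟨i, hi, rfl⟩
          obtain ⟨m, rfl⟩ := hkd
          rw [Nat.mul_div_cancel_left _ hk0] at hi
          exact ⟨by exact (Nat.mul_lt_mul_left hk0).mpr hi, ⟨i, rfl⟩⟩
      have hinj : Set.InjOn (fun i => k * i) (range (d / k)) := fun a _ b _ hab =>
        Nat.eq_of_mul_eq_mul_left hk0 hab
      have hprim : IsPrimitiveRoot (ζ ^ k) (d / k) :=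
        hζd.pow hd (Nat.mul_div_cancel' hkd).symm
      calc
        ∏ j ∈ range d,
            (1 - RatFunc.C (ζ ^ j) * RatFunc.X : RatFunc ℂ) ^
              (if k ∣ j then (k : ℤ) * ArithmeticFunction.moebius (d / k) else 0)
            = ∏ j ∈ (range d).filter (fun j => k ∣ j),
                (1 - RatFunc.C (ζ ^ j) * RatFunc.X : RatFunc ℂ) ^
                  ((k : ℤ) * ArithmeticFunction.moebius (d / k)) := by
              rw [Finset.prod_filter]
              exact Finset.prod_congr rfl fun j _ => hstep1 j
        _ = ∏ i ∈ range (d / k),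
                (1 - RatFunc.C (ζ ^ (k * i)) * RatFunc.X : RatFunc ℂ) ^
                  ((k : ℤ) * ArithmeticFunction.moebius (d / k)) := by
              rw [himg, Finset.prod_image hinj]
        _ = (∏ i ∈ range (d / k),
                (1 - RatFunc.C ((ζ ^ k) ^ i) * RatFunc.X : RatFunc ℂ)) ^
                  ((k : ℤ) * ArithmeticFunction.moebius (d / k)) := by
              rw [← Finset.prod_zpow]
              exact Finset.prod_congr rfl fun i _ => by rw [pow_mul]
        _ = (1 - RatFunc.X ^ (d / k) : RatFunc ℂ) ^
              ((k : ℤ) * ArithmeticFunction.moebius (d / k)) := by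
              rw [prod_one_sub_C_mul_X_ratfunc hdk0 hprim]
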